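/- Fix an integer m ≥ n, let J_m ⊆ P be the ideal generated by the elements t_k for all k > m together with (x_i|t)^m for i = 1, …, n, and let I_m := { g ∈ P : g symmetric and g · a_ρ ∈ J_m }, where ρ = (n−1, …, 1, 0). Then I_m equals the R-span of the set consisting of all elements t_k · s_λ with k > m and λ a partition with at most n parts, together with all elements s_λ with λ a partition with at most n parts satisfying λ_1 > m − n. -/

import Mathlib

/- R = ℤ[t₁, t₂, …] with tₖ encoded as `MvPolynomial.X (k-1)`, i.e. 0-indexed;
   P = R[x₁, …, xₙ] = MvPolynomial (Fin n) R. -/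

open MvPolynomial

noncomputable section

abbrev R : Type := MvPolynomial ℕ ℤ

abbrev P (n : ℕ) : Type := MvPolynomial (Fin n) R

/-- The double monomial `(x_i | t)^k = (x_i + t₁) ⋯ (x_i + tₖ)`. -/
def dm (n : ℕ) (i : Fin n) (k : ℕ) : P n :=
  ∏ j ∈ Finset.range k, (X i + C (MvPolynomial.X j : R))

/-- `a_ν = Σ_{σ ∈ S_n} sgn(σ) Π_i (x_{σ(i)} | t)^{ν_i}`. -/
def aPoly (n : ℕ) (ν : Fin n → ℕ) : P n :=
  ∑ σ : Equiv.Perm (Fin n), (Equiv.Perm.sign σ : ℤ) • ∏ i : Fin n, dm n (σ i) (ν i)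

/-- `ρ = (n-1, n-2, …, 1, 0)`. -/
def rho (n : ℕ) : Fin n → ℕ := fun i => n - 1 - (i : ℕ)

/-- The ideal `J_m ⊆ P` generated by the `t_k` for `k > m` (encoded 0-indexed: the
constants `MvPolynomial.X k` for `k ≥ m`) and the `(x_i|t)^m` for `i = 1, …, n`. -/
def Jm (n m : ℕ) : Ideal (P n) :=
  Ideal.span ({p : P n | ∃ k : ℕ, m ≤ k ∧ p = C (MvPolynomial.X k : R)} ∪
    {p : P n | ∃ i : Fin n, p = dm n i m})


namespace Stmt9

variable {n m : ℕ}

/-- the product basis element `∏ i, (x_i|t)^(α i)` -/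
def e (n : ℕ) (α : Fin n → ℕ) : P n := ∏ i, dm n i (α i)

def degE {n : ℕ} (α : Fin n → ℕ) : ℕ := ∑ i, α i

def toF {n : ℕ} (α : Fin n → ℕ) : Fin n →₀ ℕ := Finsupp.equivFunOnFinite.symm α

lemma toF_inj {n : ℕ} : Function.Injective (toF (n := n)) :=
  Finsupp.equivFunOnFinite.symm.injective

lemma sum_toF {n : ℕ} (α : Fin n → ℕ) : (∑ i ∈ (toF α).support, toF α i) = degE α := by
  rw [degE]
  rw [Finset.sum_subset (Finset.subset_univ _)]
  · rfl
  · intro x _ hx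
    simpa using (Finsupp.notMem_support_iff.mp hx)

lemma monomial_toF {n : ℕ} (α : Fin n → ℕ) :
    (monomial (toF α) (1 : R) : P n) = ∏ i, X i ^ α i := by
  rw [← prod_X_pow_eq_monomial]
  rw [Finset.prod_subset (Finset.subset_univ _) (fun x _ hx => by
    have : toF α x = 0 := Finsupp.notMem_support_iff.mp hx
    simp [this])]
  exact Finset.prod_congr rfl (fun x _ => by simp [toF])

lemma dm_decomp (i : Fin n) (k : ℕ) :
    ∃ q : P n, dm n i k = X i ^ k + q ∧ (q = 0 ∨ q.totalDegree < k) := by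
  induction k with
  | zero => exact ⟨0, by simp [dm], Or.inl rfl⟩
  | succ k ih =>
    obtain ⟨q, hq, hdq⟩ := ih
    refine ⟨C (MvPolynomial.X k : R) * X i ^ k + q * (X i + C (MvPolynomial.X k)), ?_, ?_⟩
    · rw [dm, Finset.prod_range_succ, ← dm, hq]; ring
    · right
      have h1 : (C (MvPolynomial.X k : R) * X i ^ k : P n).totalDegree < k + 1 := by
        calc (C (MvPolynomial.X k : R) * X i ^ k : P n).totalDegree
            ≤ (C (MvPolynomial.X k : R) : P n).totalDegree + (X i ^ k : P n).totalDegree :=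
              totalDegree_mul _ _
          _ ≤ 0 + k := by
              gcongr
              · exact le_of_eq (totalDegree_C _)
              · exact (totalDegree_X_pow _ _).le
          _ < k + 1 := by omega
      have h2 : (q * (X i + C (MvPolynomial.X k)) : P n).totalDegree < k + 1 := by
        rcases hdq with h | h
        · simpa [h] using Nat.succ_pos k
        · calc (q * (X i + C (MvPolynomial.X k)) : P n).totalDegree
              ≤ q.totalDegree + (X i + C (MvPolynomial.X k) : P n).totalDegree :=
                totalDegree_mul _ _
            _ ≤ q.totalDegree + 1 := by
                gcongr
                refine (totalDegree_add _ _).trans ?_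
                simp [totalDegree_X, totalDegree_C]
            _ < k + 1 := by omega
      exact lt_of_le_of_lt (totalDegree_add _ _) (max_lt h1 h2)

lemma e_decomp (α : Fin n → ℕ) :
    ∃ q : P n, e n α = monomial (toF α) 1 + q ∧ (q = 0 ∨ q.totalDegree < degE α) := by
  rw [monomial_toF]
  have key : ∀ s : Finset (Fin n), ∃ q : P n,
      (∏ i ∈ s, dm n i (α i)) = (∏ i ∈ s, X i ^ α i) + q ∧
      (q = 0 ∨ q.totalDegree < ∑ i ∈ s, α i) := by
    intro s
    induction s using Finset.cons_induction with
    | empty => exact ⟨0, by simp, Or.inl rfl⟩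
    | cons a s ha ih =>
      obtain ⟨q, hq, hdq⟩ := ih
      obtain ⟨r, hr, hdr⟩ := dm_decomp a (α a)
      refine ⟨X a ^ α a * q + r * ((∏ i ∈ s, X i ^ α i) + q), ?_, ?_⟩
      · rw [Finset.prod_cons, Finset.prod_cons, hq, hr]; ring
      · have hXdeg : (∏ i ∈ s, (X i ^ α i : P n)).totalDegree ≤ ∑ i ∈ s, α i := by
          refine (totalDegree_finset_prod _ _).trans ?_
          gcongr with i
          exact (totalDegree_X_pow _ _).le
        rcases hdq with hq0 | hq0 <;> rcases hdr with hr0 | hr0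
        · left; simp [hq0, hr0]
        · right
          simp only [hq0, mul_zero, zero_add, add_zero]
          calc (r * ∏ i ∈ s, (X i ^ α i : P n)).totalDegree
              ≤ r.totalDegree + (∏ i ∈ s, (X i ^ α i : P n)).totalDegree := totalDegree_mul _ _
            _ < α a + ∑ i ∈ s, α i := by omega
            _ = ∑ i ∈ Finset.cons a s ha, α i := by rw [Finset.sum_cons]
        · right
          simp only [hr0, zero_mul, add_zero]
          calc (X a ^ α a * q : P n).totalDegree
              ≤ (X a ^ α a : P n).totalDegree + q.totalDegree := totalDegree_mul _ _
            _ ≤ α a + q.totalDegree := by gcongr; exact (totalDegree_X_pow _ _).le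
            _ < α a + ∑ i ∈ s, α i := by omega
            _ = ∑ i ∈ Finset.cons a s ha, α i := by rw [Finset.sum_cons]
        · right
          have h1 : (X a ^ α a * q : P n).totalDegree < α a + ∑ i ∈ s, α i := by
            calc (X a ^ α a * q : P n).totalDegree
                ≤ (X a ^ α a : P n).totalDegree + q.totalDegree := totalDegree_mul _ _
              _ ≤ α a + q.totalDegree := by gcongr; exact (totalDegree_X_pow _ _).le
              _ < α a + ∑ i ∈ s, α i := by omega
          have h2 : (r * ((∏ i ∈ s, X i ^ α i) + q) : P n).totalDegree
              < α a + ∑ i ∈ s, α i := by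
            calc (r * ((∏ i ∈ s, X i ^ α i) + q) : P n).totalDegree
                ≤ r.totalDegree + ((∏ i ∈ s, X i ^ α i) + q : P n).totalDegree :=
                  totalDegree_mul _ _
              _ ≤ r.totalDegree + max (∏ i ∈ s, (X i ^ α i : P n)).totalDegree q.totalDegree :=
                  by gcongr; exact totalDegree_add _ _
              _ < α a + ∑ i ∈ s, α i := by
                  have := hXdeg; omega
          calc ((X a ^ α a * q : P n) + r * ((∏ i ∈ s, X i ^ α i) + q)).totalDegree
              ≤ _ := totalDegree_add _ _
            _ < α a + ∑ i ∈ s, α i := by simp [h1, h2]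
            _ = ∑ i ∈ Finset.cons a s ha, α i := by rw [Finset.sum_cons]
  obtain ⟨q, hq, hdq⟩ := key Finset.univ
  exact ⟨q, hq, hdq⟩

lemma totalDegree_e_le (α : Fin n → ℕ) : (e n α).totalDegree ≤ degE α := by
  obtain ⟨q, hq, hdq⟩ := e_decomp α
  rw [hq]
  refine (totalDegree_add _ _).trans ?_
  have hm : (monomial (toF α) (1:R) : P n).totalDegree ≤ degE α := by
    refine (totalDegree_monomial_le _ _).trans (le_of_eq ?_)
    rw [Finsupp.sum]
    exact sum_toF α
  rcases hdq with h | h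
  · rw [h, totalDegree_zero]; exact max_le hm (Nat.zero_le _)
  · exact max_le hm h.le

/-- the key triangularity: coefficient of `X^α` in `e β`, when `degE α ≥ degE β`. -/
lemma coeff_e (α β : Fin n → ℕ) (h : degE β ≤ degE α) :
    coeff (toF α) (e n β) = if α = β then 1 else 0 := by
  obtain ⟨q, hq, hdq⟩ := e_decomp β
  have hqc : coeff (toF α) q = 0 := by
    rcases hdq with h0 | h0
    · simp [h0]
    · refine coeff_eq_zero_of_totalDegree_lt ?_
      rw [sum_toF]; omega
  rw [hq, coeff_add, hqc, add_zero, coeff_monomial]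
  by_cases hab : α = β
  · simp [hab]
  · simp only [if_neg hab, if_neg (fun hc => hab (toF_inj hc).symm)]
  

lemma sum_e_eq_zero (s : Finset (Fin n → ℕ)) : ∀ g : (Fin n → ℕ) → R,
    (∑ α ∈ s, g α • e n α = 0) → ∀ i ∈ s, g i = 0 := by
  induction s using Finset.strongInduction with
  | _ s ih =>
    intro g hg i hi
    rcases s.eq_empty_or_nonempty with rfl | hne
    · simp at hi
    obtain ⟨α0, hα0s, hmax⟩ := s.exists_max_image degE hne
    have h0 : g α0 = 0 := by
      have hc := congrArg (coeff (toF α0)) hg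
      rw [coeff_sum, coeff_zero] at hc
      rw [Finset.sum_congr rfl (fun α hα => by
        rw [coeff_smul, coeff_e α0 α (hmax α hα), smul_eq_mul, mul_ite, mul_one, mul_zero])] at hc
      rwa [Finset.sum_ite_eq s α0 g, if_pos hα0s] at hc
    rcases eq_or_ne i α0 with rfl | hne2
    · exact h0
    · refine ih (s.erase α0) (Finset.erase_ssubset hα0s) g ?_ i (Finset.mem_erase.mpr ⟨hne2, hi⟩)
      rw [← Finset.add_sum_erase s (fun α => g α • e n α) hα0s] at hg
      simpa [h0] using hg
lemma linearIndependent_e : LinearIndependent R (e n) := by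
  rw [linearIndependent_iff']
  intro s g hg i hi
  exact sum_e_eq_zero s g hg i hi
lemma mem_span_e (f : P n) : f ∈ Submodule.span R (Set.range (e n)) := by
  suffices H : ∀ d, ∀ f : P n, f.totalDegree ≤ d → f ∈ Submodule.span R (Set.range (e n)) by
    exact H f.totalDegree f le_rfl
  intro d
  induction d using Nat.strong_induction_on with
  | _ d ih =>
    intro f hf
    rw [f.as_sum]
    apply Submodule.sum_mem
    intro γ hγ
    set α : Fin n → ℕ := fun i => γ i with hα
    have hγα : toF α = γ := by
      apply Finsupp.ext; intro i; simp [toF, hα]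
    have hdeg : degE α ≤ d := by
      rw [← sum_toF α, hγα]
      exact le_trans (le_totalDegree hγ) hf
    obtain ⟨q, hq, hdq⟩ := e_decomp α
    have : (monomial γ (coeff γ f) : P n) = coeff γ f • e n α - coeff γ f • q := by
      rw [hq, hγα, smul_add, smul_monomial, smul_eq_mul, mul_one]; ring
    rw [this]
    refine Submodule.sub_mem _ (Submodule.smul_mem _ _ (Submodule.subset_span ⟨α, rfl⟩)) ?_
    refine Submodule.smul_mem _ _ ?_
    rcases hdq with rfl | hdq
    · exact Submodule.zero_mem _
    · exact ih q.totalDegree (lt_of_lt_of_le hdq hdeg) q le_rfl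
def bE (n : ℕ) : Module.Basis (Fin n → ℕ) R (P n) :=
  Module.Basis.mk linearIndependent_e (fun f _ => mem_span_e f)
lemma bE_apply (α : Fin n → ℕ) : bE n α = e n α := Module.Basis.mk_apply _ _ _
lemma repr_e (α : Fin n → ℕ) : (bE n).repr (e n α) = Finsupp.single α 1 := by
  rw [← bE_apply, Module.Basis.repr_self]

open Equiv

def A (n : ℕ) (α : Fin n → ℕ) : P n :=
  ∑ σ : Equiv.Perm (Fin n), (Equiv.Perm.sign σ : ℤ) • e n (α ∘ ⇑σ⁻¹)

lemma rename_dm (σ : Equiv.Perm (Fin n)) (i : Fin n) (k : ℕ) :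
    rename σ (dm n i k) = dm n (σ i) k := by
  rw [dm, map_prod, dm]
  exact Finset.prod_congr rfl (fun j _ => by rw [map_add, rename_X, rename_C])

lemma prod_dm_eq (σ : Equiv.Perm (Fin n)) (ν : Fin n → ℕ) :
    (∏ i : Fin n, dm n (σ i) (ν i)) = e n (ν ∘ ⇑σ⁻¹) := by
  rw [e, ← Equiv.prod_comp σ (fun j => dm n j ((ν ∘ ⇑σ⁻¹) j))]
  exact Finset.prod_congr rfl (fun i _ => by simp)

lemma rename_e (σ : Equiv.Perm (Fin n)) (α : Fin n → ℕ) :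
    rename σ (e n α) = e n (α ∘ ⇑σ⁻¹) := by
  rw [e, map_prod, ← prod_dm_eq σ α]
  exact Finset.prod_congr rfl (fun i _ => rename_dm σ i (α i))

lemma aPoly_eq_A (ν : Fin n → ℕ) : aPoly n ν = A n ν := by
  rw [aPoly, A]
  exact Finset.sum_congr rfl (fun σ _ => by rw [prod_dm_eq])

lemma sign_sq (π : Equiv.Perm (Fin n)) :
    ((Equiv.Perm.sign π : ℤ)) * ((Equiv.Perm.sign π : ℤ)) = 1 := by
  rw [← Units.val_mul, ← map_mul]
  simp

lemma A_comp (α : Fin n → ℕ) (π : Equiv.Perm (Fin n)) :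
    A n (α ∘ π) = (Equiv.Perm.sign π : ℤ) • A n α := by
  rw [A, A, Finset.smul_sum]
  refine Fintype.sum_equiv (Equiv.mulRight π⁻¹) _ _ (fun σ => ?_)
  have h1 : (α ∘ π) ∘ ⇑σ⁻¹ = α ∘ ⇑((Equiv.mulRight π⁻¹) σ)⁻¹ := by
    funext j
    simp [Equiv.Perm.mul_apply]
  rw [h1, smul_smul]
  congr 1
  have hs : Equiv.Perm.sign ((Equiv.mulRight π⁻¹) σ) = Equiv.Perm.sign σ * Equiv.Perm.sign π := by
    simp [map_mul]
  rw [hs, Units.val_mul]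
  linear_combination (-(Equiv.Perm.sign σ : ℤ)) * sign_sq π

lemma rename_A (σ : Equiv.Perm (Fin n)) (α : Fin n → ℕ) :
    rename σ (A n α) = (Equiv.Perm.sign σ : ℤ) • A n α := by
  rw [A, map_sum, Finset.smul_sum]
  refine Fintype.sum_equiv (Equiv.mulLeft σ) _ _ (fun τ => ?_)
  rw [map_zsmul, rename_e]
  have h1 : (α ∘ ⇑τ⁻¹) ∘ ⇑σ⁻¹ = α ∘ ⇑((Equiv.mulLeft σ) τ)⁻¹ := by
    funext j; simp [Equiv.Perm.mul_apply]
  rw [h1, smul_smul]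
  congr 1
  have hs : Equiv.Perm.sign ((Equiv.mulLeft σ) τ) = Equiv.Perm.sign σ * Equiv.Perm.sign τ := by
    simp [map_mul]
  rw [hs, Units.val_mul]
  linear_combination (-(Equiv.Perm.sign τ : ℤ)) * sign_sq σ

lemma repr_rename (σ : Equiv.Perm (Fin n)) (h : P n) (α : Fin n → ℕ) :
    (bE n).repr (rename (σ : Fin n → Fin n) h) α = (bE n).repr h (α ∘ σ) := by
  have key : (Finsupp.lapply α) ∘ₗ ((bE n).repr.toLinearMap) ∘ₗ
        (rename (σ : Fin n → Fin n) : P n →ₐ[R] P n).toLinearMap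
      = (Finsupp.lapply (α ∘ σ)) ∘ₗ ((bE n).repr.toLinearMap) := by
    apply Module.Basis.ext (bE n)
    intro β
    have hiff : (β ∘ ⇑σ⁻¹ = α) ↔ (β = α ∘ σ) := by
      constructor
      · rintro rfl; funext j; simp
      · rintro rfl; funext j; simp
    simp only [LinearMap.comp_apply, AlgHom.toLinearMap_apply, LinearEquiv.coe_toLinearMap,
      bE_apply, rename_e, repr_e, Finsupp.lapply_apply, Finsupp.single_apply]
    rw [if_congr hiff rfl rfl]
  exact DFunLike.congr_fun key h

lemma repr_comp_perm {h : P n} (halt : ∀ σ : Equiv.Perm (Fin n),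
      rename (σ : Fin n → Fin n) h = (Equiv.Perm.sign σ : ℤ) • h)
    (α : Fin n → ℕ) (σ : Equiv.Perm (Fin n)) :
    (bE n).repr h (α ∘ σ) = (Equiv.Perm.sign σ : ℤ) • (bE n).repr h α := by
  rw [← repr_rename, halt σ, map_zsmul]
  simp

lemma repr_zero_of_not_inj {h : P n} (halt : ∀ σ : Equiv.Perm (Fin n),
      rename (σ : Fin n → Fin n) h = (Equiv.Perm.sign σ : ℤ) • h)
    {α : Fin n → ℕ} (hna : ¬ Function.Injective α) : (bE n).repr h α = 0 := by
  rw [Function.not_injective_iff] at hna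
  obtain ⟨i, j, hij, hne⟩ := hna
  have hcomp : α ∘ (Equiv.swap i j) = α := by
    funext x
    rcases eq_or_ne x i with rfl | hxi
    · simp [Equiv.swap_apply_left, hij]
    rcases eq_or_ne x j with rfl | hxj
    · simp [Equiv.swap_apply_right, hij]
    · rw [Function.comp_apply, Equiv.swap_apply_of_ne_of_ne hxi hxj]
  have := repr_comp_perm halt α (Equiv.swap i j)
  rw [hcomp, Equiv.Perm.sign_swap hne] at this
  have h2 : (2 : ℤ) • (bE n).repr h α = 0 := by
    have : (bE n).repr h α = -(bE n).repr h α := by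
      simpa using this
    rw [two_smul]
    nth_rewrite 1 [this]
    ring
  exact (smul_eq_zero.mp h2).resolve_left (by norm_num)


lemma sort_unique {α : Fin n → ℕ} (hinj : Function.Injective α) (σ : Equiv.Perm (Fin n))
    (hmono : Monotone (α ∘ σ)) : σ = Tuple.sort α := by
  have h1 : α ∘ σ = α ∘ Tuple.sort α := Tuple.comp_sort_eq_comp_iff_monotone.mpr hmono
  ext i
  exact congrArg Fin.val (hinj (congrFun h1 i))

/-- the permutation sorting `α` into decreasing order -/
def sperm {n : ℕ} (α : Fin n → ℕ) : Equiv.Perm (Fin n) := Tuple.sort α * Fin.revPerm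

def sd {n : ℕ} (α : Fin n → ℕ) : Fin n → ℕ := α ∘ sperm α

lemma sd_comp (α : Fin n → ℕ) : sd α ∘ ⇑(sperm α)⁻¹ = α := by
  funext j; simp [sd]

lemma revPerm_strictAnti : StrictAnti (⇑(Fin.revPerm : Equiv.Perm (Fin n))) := by
  intro a b hab
  simpa [Fin.revPerm] using (Fin.rev_lt_rev.mpr hab)

lemma sd_strictAnti {α : Fin n → ℕ} (hinj : Function.Injective α) : StrictAnti (sd α) := by
  have hmono : Monotone (α ∘ Tuple.sort α) := Tuple.monotone_sort α
  have hsm : StrictMono (α ∘ Tuple.sort α) :=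
    hmono.strictMono_of_injective (hinj.comp (Tuple.sort α).injective)
  have : sd α = (α ∘ Tuple.sort α) ∘ ⇑(Fin.revPerm : Equiv.Perm (Fin n)) := by
    funext j; simp [sd, sperm, Equiv.Perm.mul_apply]
  rw [this]
  exact hsm.comp_strictAnti revPerm_strictAnti

lemma sign_smul_eq_zero (σ : Equiv.Perm (Fin n)) (c : R) :
    (Equiv.Perm.sign σ : ℤ) • c = 0 ↔ c = 0 := by
  constructor
  · intro h0
    have := congrArg (fun x : R => (Equiv.Perm.sign σ : ℤ) • x) h0
    simpa [smul_smul, sign_sq] using this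
  · intro h0; rw [h0, smul_zero]

lemma sperm_spec {ν : Fin n → ℕ} (hν : StrictAnti ν) (τ : Equiv.Perm (Fin n)) :
    sperm (ν ∘ ⇑τ⁻¹) = τ ∧ sd (ν ∘ ⇑τ⁻¹) = ν := by
  set α := ν ∘ ⇑τ⁻¹ with hα
  have hinj : Function.Injective α := hν.injective.comp τ⁻¹.injective
  have hmono : Monotone (α ∘ ((τ * Fin.revPerm : Equiv.Perm (Fin n)) : Fin n → Fin n)) := by
    have : α ∘ ((τ * Fin.revPerm : Equiv.Perm (Fin n)) : Fin n → Fin n) = ν ∘ ⇑(Fin.revPerm : Equiv.Perm (Fin n)) := by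
      funext j; simp [hα, Equiv.Perm.mul_apply]
    rw [this]
    exact (StrictAnti.comp hν revPerm_strictAnti).monotone
  have hsort : τ * Fin.revPerm = Tuple.sort α := sort_unique hinj _ hmono
  have hsperm : sperm α = τ := by
    rw [sperm, ← hsort]
    ext j
    simp [Equiv.Perm.mul_apply, Fin.rev_rev, Fin.revPerm]
  refine ⟨hsperm, ?_⟩
  rw [sd, hsperm]
  funext j; simp [hα]

lemma alt_decomp {h : P n} (halt : ∀ σ : Equiv.Perm (Fin n),
      rename (σ : Fin n → Fin n) h = (Equiv.Perm.sign σ : ℤ) • h) :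
    h = ∑ ν ∈ ((bE n).repr h).support.filter (fun ν => StrictAnti ν),
        (bE n).repr h ν • A n ν := by
  have hrep : ∑ α ∈ ((bE n).repr h).support, (bE n).repr h α • e n α = h := by
    conv_rhs => rw [← (bE n).linearCombination_repr h]
    rw [Finsupp.linearCombination_apply, Finsupp.sum]
    exact Finset.sum_congr rfl (fun α _ => by rw [bE_apply])
  have step1 : ∑ σ : Equiv.Perm (Fin n), (Equiv.Perm.sign σ : ℤ) • rename (σ : Fin n → Fin n) h
      = (n.factorial : ℤ) • h := by
    rw [Finset.sum_congr rfl (fun σ _ => by rw [halt σ, smul_smul, sign_sq, one_smul])]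
    rw [Finset.sum_const, Finset.card_univ, Fintype.card_perm, Fintype.card_fin, natCast_zsmul]
  have step3 : ∑ σ : Equiv.Perm (Fin n), (Equiv.Perm.sign σ : ℤ) • rename (σ : Fin n → Fin n) h
      = ∑ α ∈ ((bE n).repr h).support, (bE n).repr h α • A n α := by
    have hterm : ∀ σ : Equiv.Perm (Fin n), (Equiv.Perm.sign σ : ℤ) • rename (σ : Fin n → Fin n) h
        = ∑ α ∈ ((bE n).repr h).support,
            (bE n).repr h α • ((Equiv.Perm.sign σ : ℤ) • e n (α ∘ ⇑σ⁻¹)) := by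
      intro σ
      conv_lhs => rw [← hrep]
      rw [map_sum, Finset.smul_sum]
      refine Finset.sum_congr rfl (fun α _ => ?_)
      rw [LinearMapClass.map_smul, rename_e, smul_comm]
    rw [Finset.sum_congr rfl (fun σ _ => hterm σ), Finset.sum_comm]
    refine Finset.sum_congr rfl (fun α _ => ?_)
    rw [A, Finset.smul_sum]
  have key : ∑ α ∈ ((bE n).repr h).support, (bE n).repr h α • A n α
      = ∑ p ∈ (((bE n).repr h).support.filter (fun ν => StrictAnti ν)) ×ˢ
          (Finset.univ : Finset (Equiv.Perm (Fin n))),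
          (bE n).repr h p.1 • A n p.1 := by
    refine Finset.sum_nbij' (fun α => (sd α, sperm α)) (fun p => p.1 ∘ ⇑p.2⁻¹)
      ?_ ?_ ?_ ?_ ?_
    · intro α hα
      have hinj : Function.Injective α := by
        by_contra hni
        exact (Finsupp.mem_support_iff.mp hα) (repr_zero_of_not_inj halt hni)
      rw [Finset.mem_product, Finset.mem_filter]
      refine ⟨⟨?_, sd_strictAnti hinj⟩, Finset.mem_univ _⟩
      rw [Finsupp.mem_support_iff]
      show (bE n).repr h (sd α) ≠ 0
      rw [show sd α = α ∘ ⇑(sperm α) from rfl, repr_comp_perm halt, Ne, sign_smul_eq_zero]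
      exact Finsupp.mem_support_iff.mp hα
    · intro p hp
      rw [Finset.mem_product, Finset.mem_filter] at hp
      rw [Finsupp.mem_support_iff]
      show (bE n).repr h (p.1 ∘ ⇑p.2⁻¹) ≠ 0
      rw [repr_comp_perm halt, Ne, sign_smul_eq_zero]
      exact Finsupp.mem_support_iff.mp hp.1.1
    · intro α _
      exact sd_comp α
    · intro p hp
      rw [Finset.mem_product, Finset.mem_filter] at hp
      obtain ⟨hsp, hsd⟩ := sperm_spec hp.1.2 p.2
      exact Prod.ext hsd hsp
    · intro α hα
      have hinj : Function.Injective α := by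
        by_contra hni
        exact (Finsupp.mem_support_iff.mp hα) (repr_zero_of_not_inj halt hni)
      show (bE n).repr h α • A n α = (bE n).repr h (sd α) • A n (sd α)

      rw [show sd α = α ∘ ⇑(sperm α) from rfl, repr_comp_perm halt,
        A_comp, smul_assoc, smul_comm ((bE n).repr h α), smul_smul, sign_sq, one_smul]
  have prodsum : ∑ p ∈ (((bE n).repr h).support.filter (fun ν => StrictAnti ν)) ×ˢ
          (Finset.univ : Finset (Equiv.Perm (Fin n))),
          (bE n).repr h p.1 • A n p.1
      = (n.factorial : ℤ) • ∑ ν ∈ ((bE n).repr h).support.filter (fun ν => StrictAnti ν),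
          (bE n).repr h ν • A n ν := by
    rw [Finset.sum_product, Finset.smul_sum]
    refine Finset.sum_congr rfl (fun ν _ => ?_)
    rw [show (∑ y : Equiv.Perm (Fin n), (bE n).repr h (ν, y).1 • A n (ν, y).1)
        = ∑ _y : Equiv.Perm (Fin n), (bE n).repr h ν • A n ν from rfl]
    rw [Finset.sum_const, Finset.card_univ, Fintype.card_perm, Fintype.card_fin, natCast_zsmul]
  have main : (n.factorial : ℤ) • h
      = (n.factorial : ℤ) • ∑ ν ∈ ((bE n).repr h).support.filter (fun ν => StrictAnti ν),
          (bE n).repr h ν • A n ν := by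
    rw [← step1, step3, key, prodsum]
  have hfac : (n.factorial : ℤ) ≠ 0 := by
    exact_mod_cast n.factorial_ne_zero
  exact smul_right_injective (P n) hfac main


def TR (m : ℕ) : Ideal R := Ideal.span {r : R | ∃ k, m ≤ k ∧ r = MvPolynomial.X k}

def SM (n m : ℕ) : Set (P n) :=
  {p | ∃ k, m ≤ k ∧ ∃ α : Fin n → ℕ, p = (MvPolynomial.X k : R) • e n α} ∪
  {p | ∃ α : Fin n → ℕ, (¬ ∀ i, α i < m) ∧ p = e n α}

def M (n m : ℕ) : Submodule R (P n) := Submodule.span R (SM n m)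

lemma e_zero : e n (fun _ => 0) = 1 := by
  simp [e, dm]

lemma dm_split (i : Fin n) (d : ℕ) :
    dm n i (m + d) = dm n i m * ∏ j ∈ Finset.range d, (X i + C (MvPolynomial.X (m + j) : R)) := by
  rw [dm, dm, Finset.prod_range_add]

lemma e_single_eq_dm (i : Fin n) (k : ℕ) :
    e n (fun j => if j = i then k else 0) = dm n i k := by
  rw [e]
  rw [Finset.prod_eq_single_of_mem i (Finset.mem_univ i) (fun b _ hb => by simp [hb, dm])]
  simp

lemma e_mul_X (j : Fin n) (α : Fin n → ℕ) :
    X j * e n α = e n (Function.update α j (α j + 1))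
      - (MvPolynomial.X (α j) : R) • e n α := by
  have herase : ∀ β : Fin n → ℕ, e n β = dm n j (β j) * ∏ i ∈ Finset.univ.erase j, dm n i (β i) :=
    fun β => (Finset.mul_prod_erase Finset.univ (fun i => dm n i (β i)) (Finset.mem_univ j)).symm
  have hrest : ∏ i ∈ Finset.univ.erase j, dm n i ((Function.update α j (α j + 1)) i)
      = ∏ i ∈ Finset.univ.erase j, dm n i (α i) := by
    refine Finset.prod_congr rfl (fun i hi => ?_)
    rw [Function.update_of_ne (Finset.mem_erase.mp hi).1]
  have hdm : dm n j (α j + 1) = dm n j (α j) * (X j + C (MvPolynomial.X (α j) : R)) := by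
    rw [dm, Finset.prod_range_succ, ← dm]
  rw [herase α, herase (Function.update α j (α j + 1)), hrest, Function.update_self, hdm,
    smul_eq_C_mul]
  ring

lemma smul_e_mem_M {c : R} (hc : c ∈ TR m) (β : Fin n → ℕ) : c • e n β ∈ M n m := by
  refine Submodule.span_induction ?_ ?_ ?_ ?_ hc
  · rintro r ⟨k, hk, rfl⟩
    exact Submodule.subset_span (Or.inl ⟨k, hk, β, rfl⟩)
  · simp
  · intro x y _ _ hx hy
    rw [add_smul]; exact Submodule.add_mem _ hx hy
  · intro a x _ hx
    rw [smul_assoc]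
    exact Submodule.smul_mem _ a hx

lemma X_mul_mem (j : Fin n) {x : P n} (hx : x ∈ M n m) : X j * x ∈ M n m := by
  refine Submodule.span_induction ?_ ?_ ?_ ?_ hx
  · rintro p (⟨k, hk, α, rfl⟩ | ⟨α, hα, rfl⟩)
    · rw [mul_smul_comm, e_mul_X, smul_sub]
      refine Submodule.sub_mem _ (Submodule.subset_span (Or.inl ⟨k, hk, _, rfl⟩)) ?_
      rw [smul_comm]
      exact Submodule.smul_mem _ _ (Submodule.subset_span (Or.inl ⟨k, hk, _, rfl⟩))
    · rw [e_mul_X]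
      have hupd : ¬ ∀ i, (Function.update α j (α j + 1)) i < m := by
        intro hall
        refine hα (fun i => ?_)
        have := hall i
        rcases eq_or_ne i j with rfl | hij
        · rw [Function.update_self] at this; omega
        · rwa [Function.update_of_ne hij] at this
      refine Submodule.sub_mem _ (Submodule.subset_span (Or.inr ⟨_, hupd, rfl⟩)) ?_
      exact Submodule.smul_mem _ _ (Submodule.subset_span (Or.inr ⟨α, hα, rfl⟩))
  · simp
  · intro x y _ _ hx hy
    rw [mul_add]; exact Submodule.add_mem _ hx hy
  · intro a x _ hx
    rw [mul_smul_comm]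
    exact Submodule.smul_mem _ a hx

lemma mul_mem_M (p : P n) : ∀ x ∈ M n m, p * x ∈ M n m := by
  induction p using MvPolynomial.induction_on with
  | C r =>
    intro x hx
    rw [← smul_eq_C_mul]
    exact Submodule.smul_mem _ r hx
  | add p q hp hq =>
    intro x hx
    rw [add_mul]
    exact Submodule.add_mem _ (hp x hx) (hq x hx)
  | mul_X p j hp =>
    intro x hx
    rw [mul_assoc]
    exact hp _ (X_mul_mem j hx)

/-- `M` as an ideal -/
def MI (n m : ℕ) : Ideal (P n) where
  carrier := M n m
  add_mem' := fun hx hy => Submodule.add_mem _ hx hy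
  zero_mem' := Submodule.zero_mem _
  smul_mem' := fun p x hx => by
    rw [smul_eq_mul]; exact mul_mem_M p x hx

lemma Jm_le_M {x : P n} (hx : x ∈ Jm n m) : x ∈ M n m := by
  have : Jm n m ≤ MI n m := by
    rw [Jm, Ideal.span_le]
    rintro p (⟨k, hk, rfl⟩ | ⟨i, rfl⟩)
    · show C (MvPolynomial.X k : R) ∈ M n m
      have : (C (MvPolynomial.X k : R) : P n) = (MvPolynomial.X k : R) • e n (fun _ => 0) := by
        rw [e_zero, smul_eq_C_mul, mul_one]
      rw [this]
      exact Submodule.subset_span (Or.inl ⟨k, hk, _, rfl⟩)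
    · show dm n i m ∈ M n m
      rw [← e_single_eq_dm]
      refine Submodule.subset_span (Or.inr ⟨_, ?_, rfl⟩)
      intro hall
      have := hall i
      simp at this
  exact this hx

lemma M_le_Jm {x : P n} (hx : x ∈ M n m) : x ∈ Jm n m := by
  have : M n m ≤ (Jm n m).restrictScalars R := by
    rw [M, Submodule.span_le]
    rintro p (⟨k, hk, α, rfl⟩ | ⟨α, hα, rfl⟩)
    · show (MvPolynomial.X k : R) • e n α ∈ Jm n m
      rw [smul_eq_C_mul]
      exact Ideal.mul_mem_right _ _ (Ideal.subset_span (Or.inl ⟨k, hk, rfl⟩))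
    · show e n α ∈ Jm n m
      push_neg at hα
      obtain ⟨i, hi⟩ := hα
      obtain ⟨d, hd⟩ : ∃ d, α i = m + d := ⟨α i - m, by omega⟩
      have he : e n α = dm n i m *
          ((∏ j ∈ Finset.range d, (X i + C (MvPolynomial.X (m + j) : R))) *
            ∏ l ∈ Finset.univ.erase i, dm n l (α l)) := by
        rw [e, ← Finset.mul_prod_erase Finset.univ (fun l => dm n l (α l)) (Finset.mem_univ i),
          hd, dm_split, mul_assoc]
      rw [he]
      exact Ideal.mul_mem_right _ _ (Ideal.subset_span (Or.inr ⟨i, rfl⟩))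
  exact this hx

/-- the R-submodule of elements whose small coordinates lie in `TR m` -/
def W (n m : ℕ) : Submodule R (P n) where
  carrier := {h | ∀ α : Fin n → ℕ, (∀ i, α i < m) → (bE n).repr h α ∈ TR m}
  add_mem' := fun {x y} hx hy α hα => by
    rw [map_add, Finsupp.add_apply]
    exact Ideal.add_mem _ (hx α hα) (hy α hα)
  zero_mem' := fun α hα => by simp
  smul_mem' := fun c x hx α hα => by
    rw [map_smul, Finsupp.smul_apply, smul_eq_mul]
    exact Ideal.mul_mem_left _ c (hx α hα)

lemma mem_M_iff {h : P n} : h ∈ M n m ↔ ∀ α : Fin n → ℕ, (∀ i, α i < m) →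
    (bE n).repr h α ∈ TR m := by
  constructor
  · intro hM
    have : M n m ≤ W n m := by
      rw [M, Submodule.span_le]
      rintro p (⟨k, hk, α, rfl⟩ | ⟨α, hα, rfl⟩) <;> intro β hβ
      · show (bE n).repr ((MvPolynomial.X k : R) • e n α) β ∈ TR m
        rw [map_smul, Finsupp.smul_apply, repr_e, Finsupp.single_apply]
        rcases eq_or_ne α β with rfl | hne
        · rw [if_pos rfl, smul_eq_mul, mul_one]
          exact Ideal.subset_span ⟨k, hk, rfl⟩
        · simp [if_neg hne]
      · show (bE n).repr (e n α) β ∈ TR m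
        rw [repr_e, Finsupp.single_apply]
        have hne : α ≠ β := fun hc => hα (hc ▸ hβ)
        simp [if_neg hne]
    exact this hM
  · intro hsmall
    have hrep : h = ∑ β ∈ ((bE n).repr h).support, (bE n).repr h β • e n β := by
      conv_lhs => rw [← (bE n).linearCombination_repr h]
      rw [Finsupp.linearCombination_apply, Finsupp.sum]
      exact Finset.sum_congr rfl (fun β _ => by rw [bE_apply])
    rw [hrep]
    refine Submodule.sum_mem _ (fun β _ => ?_)
    by_cases hβ : ∀ i, β i < m
    · exact smul_e_mem_M (hsmall β hβ) β
    · exact Submodule.smul_mem _ _ (Submodule.subset_span (Or.inr ⟨β, hβ, rfl⟩))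

lemma Jm_mem_iff {h : P n} : h ∈ Jm n m ↔ ∀ α : Fin n → ℕ, (∀ i, α i < m) →
    (bE n).repr h α ∈ TR m :=
  ⟨fun hx => mem_M_iff.mp (Jm_le_M hx), fun hx => M_le_Jm (mem_M_iff.mpr hx)⟩


lemma repr_A (ν : Fin n → ℕ) :
    (bE n).repr (A n ν) = ∑ τ : Equiv.Perm (Fin n),
      (Equiv.Perm.sign τ : ℤ) • Finsupp.single (ν ∘ ⇑τ⁻¹) (1 : R) := by
  rw [A, map_sum]
  exact Finset.sum_congr rfl (fun τ _ => by rw [map_zsmul, repr_e])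

lemma A_mem_Jm {ν : Fin n → ℕ} (hν : ∃ i, m ≤ ν i) : A n ν ∈ Jm n m := by
  rw [Jm_mem_iff]
  intro α hα
  rw [repr_A]
  obtain ⟨i, hi⟩ := hν
  have hzero : ∀ τ : Equiv.Perm (Fin n),
      ((Equiv.Perm.sign τ : ℤ) • Finsupp.single (ν ∘ ⇑τ⁻¹) (1 : R)) α = 0 := by
    intro τ
    rw [Finsupp.smul_apply, Finsupp.single_apply]
    have hne : ν ∘ ⇑τ⁻¹ ≠ α := by
      intro hc
      have : α (τ i) = ν i := by
        rw [← hc]; simp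
      have := hα (τ i)
      omega
    rw [if_neg hne, smul_zero]
  rw [Finset.sum_apply']
  rw [Finset.sum_congr rfl (fun τ _ => hzero τ), Finset.sum_const_zero]
  exact Ideal.zero_mem _

lemma rho_strictAnti (hn : 1 ≤ n) : StrictAnti (rho n) := by
  intro i j hij
  have hj : (j : ℕ) < n := j.isLt
  have hij' : (i : ℕ) < (j : ℕ) := hij
  simp only [rho]
  omega

lemma strictAnti_step {ν : Fin n → ℕ} (hν : StrictAnti ν) :
    ∀ d : ℕ, ∀ i j : Fin n, (j : ℕ) = (i : ℕ) + d → ν j + d ≤ ν i := by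
  intro d
  induction d with
  | zero =>
    intro i j hij
    have : i = j := Fin.ext (by omega)
    simp [this]
  | succ d ih =>
    intro i j hij
    have hlt : (i : ℕ) + d < n := by
      have := j.isLt; omega
    have h1 : ν ⟨(i : ℕ) + d, hlt⟩ + d ≤ ν i := ih i ⟨(i : ℕ) + d, hlt⟩ rfl
    have h2 : ν j < ν ⟨(i : ℕ) + d, hlt⟩ := by
      apply hν
      rw [Fin.lt_def]
      simp only []
      omega
    omega

lemma rho_le_of_strictAnti (hn : 1 ≤ n) {ν : Fin n → ℕ} (hν : StrictAnti ν) (i : Fin n) :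
    rho n i ≤ ν i := by
  have hlt : n - 1 < n := by omega
  have := strictAnti_step hν (n - 1 - (i : ℕ)) i ⟨n - 1, hlt⟩ (by
    simp only [Fin.val_mk]
    have := i.isLt; omega)
  simp only [rho]
  omega

lemma lam_antitone (hn : 1 ≤ n) {ν : Fin n → ℕ} (hν : StrictAnti ν) :
    Antitone (fun i => ν i - rho n i) := by
  intro i j hij
  rcases eq_or_lt_of_le hij with rfl | hlt
  · exact le_refl _
  have hd := strictAnti_step hν ((j : ℕ) - (i : ℕ)) i j (by
    have : (i : ℕ) < (j : ℕ) := hlt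
    omega)
  have h1 := rho_le_of_strictAnti hn hν i
  have h2 := rho_le_of_strictAnti hn hν j
  have hij' : (i : ℕ) < (j : ℕ) := hlt
  have hjn := j.isLt
  simp only [rho] at *
  omega

lemma lam_add_rho (hn : 1 ≤ n) {ν : Fin n → ℕ} (hν : StrictAnti ν) :
    (fun i => (ν i - rho n i) + rho n i) = ν := by
  funext i
  have := rho_le_of_strictAnti hn hν i
  omega

lemma A_rho_ne_zero (hn : 1 ≤ n) : A n (rho n) ≠ 0 := by
  intro hc
  have h1 : (bE n).repr (A n (rho n)) (rho n) = 1 := by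
    rw [repr_A, Finset.sum_apply']
    rw [Finset.sum_eq_single (1 : Equiv.Perm (Fin n))]
    · simp
    · intro τ _ hτ
      rw [Finsupp.smul_apply, Finsupp.single_apply, if_neg, smul_zero]
      intro hcomp
      apply hτ
      have hinj : Function.Injective (rho n) := (rho_strictAnti hn).injective
      ext j
      have hcf := congrFun hcomp j
      have h2 : τ⁻¹ j = j := hinj hcf
      have h3 := congrArg τ h2
      have h4 : j = τ j := by simpa using h3
      exact congrArg Fin.val h4.symm
    · intro habs
      exact absurd (Finset.mem_univ _) habs
  rw [hc] at h1
  simp at h1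

/-- the left-hand-side set as a submodule -/
def Isub (n m : ℕ) : Submodule R (P n) where
  carrier := {g : P n | g.IsSymmetric ∧ g * aPoly n (rho n) ∈ Jm n m}
  add_mem' := fun {x y} hx hy =>
    ⟨hx.1.add hy.1, by rw [add_mul]; exact Ideal.add_mem _ hx.2 hy.2⟩
  zero_mem' := ⟨fun σ => by simp, by rw [zero_mul]; exact Ideal.zero_mem _⟩
  smul_mem' := fun c x hx => by
    refine ⟨fun σ => by rw [map_smul, hx.1 σ], ?_⟩
    rw [smul_mul_assoc, smul_eq_C_mul]
    exact Ideal.mul_mem_left _ _ hx.2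


end Stmt9

open Stmt9

set_option maxHeartbeats 2000000 in
/-- if `s` assigns to every partition `λ` with at most `n` parts its
double Schur polynomial (the unique symmetric polynomial with
`s_λ · a_ρ = a_{λ+ρ}`), then the ideal `I_m = {g symmetric | g · a_ρ ∈ J_m}` of
the ring of symmetric polynomials equals the `R`-span of the elements
`t_k • s_λ` (`k > m`, i.e. 0-indexed index `≥ m`, and `λ` a partition with at
most `n` parts) together with the `s_λ` for partitions `λ` with `λ₁ > m - n`. -/
theorem stmt_9 (n m : ℕ) (hn : 1 ≤ n) (hm : n ≤ m)
    (s : (Fin n → ℕ) → P n)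
    (hs : ∀ lam : Fin n → ℕ, Antitone lam →
      (s lam).IsSymmetric ∧
        s lam * aPoly n (rho n) = aPoly n (fun i => lam i + rho n i)) :
    {g : P n | g.IsSymmetric ∧ g * aPoly n (rho n) ∈ Jm n m} =
      (Submodule.span R
        ({p : P n | ∃ k : ℕ, m ≤ k ∧ ∃ lam : Fin n → ℕ, Antitone lam ∧
            p = (MvPolynomial.X k : R) • s lam} ∪
         {p : P n | ∃ lam : Fin n → ℕ, Antitone lam ∧ m - n < lam ⟨0, hn⟩ ∧
            p = s lam}) : Set (P n)) := by
  apply Set.eq_of_subset_of_subset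
  · -- hard direction
    intro g hg
    obtain ⟨hsym, hmem⟩ := hg
    -- g * a_ρ is alternating
    have halt : ∀ σ : Equiv.Perm (Fin n),
        rename (σ : Fin n → Fin n) (g * aPoly n (rho n))
          = (Equiv.Perm.sign σ : ℤ) • (g * aPoly n (rho n)) := by
      intro σ
      rw [map_mul, hsym σ, aPoly_eq_A, rename_A, mul_smul_comm]
    have hdec := alt_decomp halt
    set c := (bE n).repr (g * aPoly n (rho n)) with hc
    set F := c.support.filter (fun ν => StrictAnti ν) with hF
    have hFanti : ∀ ν ∈ F, StrictAnti ν := by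
      intro ν hν
      exact (Finset.mem_filter.mp hν).2
    -- the candidate symmetric polynomial
    set G := ∑ ν ∈ F, c ν • s (fun i => ν i - rho n i) with hG
    have hGa : G * aPoly n (rho n) = g * aPoly n (rho n) := by
      have hterm : ∀ ν ∈ F, (c ν • s (fun i => ν i - rho n i)) * aPoly n (rho n)
          = c ν • A n ν := by
        intro ν hν
        have h3 := (hs (fun i => ν i - rho n i) (lam_antitone hn (hFanti ν hν))).2
        have harg : (fun i => ν i - rho n i + rho n i) = ν := by
          funext i
          have := rho_le_of_strictAnti hn (hFanti ν hν) i
          omega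
        rw [smul_mul_assoc, h3, harg, aPoly_eq_A]
      rw [hG, Finset.sum_mul, Finset.sum_congr rfl hterm]
      exact hdec.symm
    have hAne : aPoly n (rho n) ≠ 0 := by
      rw [aPoly_eq_A]; exact A_rho_ne_zero hn
    have hgG : G = g := mul_right_cancel₀ hAne hGa
    rw [← hgG]
    rw [SetLike.mem_coe]
    refine Submodule.sum_mem _ (fun ν hν => ?_)
    have hanti := hFanti ν hν
    by_cases hbig : m ≤ ν ⟨0, hn⟩
    · refine Submodule.smul_mem _ _ (Submodule.subset_span (Or.inr ?_))
      refine ⟨_, lam_antitone hn hanti, ?_, rfl⟩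
      have h0 := rho_le_of_strictAnti hn hanti ⟨0, hn⟩
      simp only [rho] at *
      omega
    · have hsmall : ∀ i, ν i < m := by
        intro i
        have hle : (⟨0, hn⟩ : Fin n) ≤ i := by
          rw [Fin.le_def]; exact Nat.zero_le _
        have := hanti.antitone hle
        omega
      have hcTR : c ν ∈ TR m := Jm_mem_iff.mp hmem ν hsmall
      refine Submodule.span_induction ?_ ?_ ?_ ?_ hcTR
      · rintro r ⟨k, hk, rfl⟩
        exact Submodule.subset_span (Or.inl ⟨k, hk, _, lam_antitone hn hanti, rfl⟩)
      · simp
      · intro x y _ _ hx hy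
        rw [add_smul]; exact Submodule.add_mem _ hx hy
      · intro a x _ hx
        rw [smul_assoc]
        exact Submodule.smul_mem _ a hx
  · -- easy direction
    intro g hgspan
    have hgens : ({p : P n | ∃ k : ℕ, m ≤ k ∧ ∃ lam : Fin n → ℕ, Antitone lam ∧
            p = (MvPolynomial.X k : R) • s lam} ∪
         {p : P n | ∃ lam : Fin n → ℕ, Antitone lam ∧ m - n < lam ⟨0, hn⟩ ∧
            p = s lam}) ⊆ (Isub n m : Set (P n)) := by
      rintro p (⟨k, hk, lam, hlam, rfl⟩ | ⟨lam, hlam, hbound, rfl⟩)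
      · refine ⟨fun σ => by rw [map_smul, (hs lam hlam).1 σ], ?_⟩
        rw [smul_mul_assoc, (hs lam hlam).2, smul_eq_C_mul]
        exact Ideal.mul_mem_right _ _ (Ideal.subset_span (Or.inl ⟨k, hk, rfl⟩))
      · refine ⟨(hs lam hlam).1, ?_⟩
        rw [(hs lam hlam).2, aPoly_eq_A]
        refine A_mem_Jm ⟨⟨0, hn⟩, ?_⟩
        simp only [rho]
        omega
    exact Submodule.span_le.mpr hgens (SetLike.mem_coe.mp hgspan)

end
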